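/- arXiv:1012.4193 — 2 statements merged into one kernel-verified Lean document; each statement's English description precedes it below -/
import Mathlib

section
/- The three-term formal delta function identity holds: x_0^{-1}\,\delta((x_1 - x_2)/x_0) - x_0^{-1}\,\delta((x_2 - x_1)/(-x_0)) = x_2^{-1}\,\delta((x_1 - x_0)/x_2), as formal series in three commuting formal variables, with all binomials expanded in nonnegative integral powers of the second listed variable. -/
open scoped BigOperators

noncomputable def zbinom (n : ℤ) (k : ℕ) : ℂ :=
  (∏ i ∈ Finset.range k, ((n : ℂ) - (i : ℂ))) / (Nat.factorial k : ℂ)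

lemma prod_cast (n k : ℕ) :
    (∏ i ∈ Finset.range k, ((n : ℂ) - (i : ℂ))) = (n.descFactorial k : ℂ) := by
  induction k with
  | zero => simp
  | succ k ih =>
    rw [Finset.prod_range_succ, ih, Nat.descFactorial_succ, Nat.cast_mul]
    by_cases h : k ≤ n
    · rw [Nat.cast_sub h]; ring
    · have h0 : n.descFactorial k = 0 := Nat.descFactorial_eq_zero_iff_lt.mpr (by omega)
      simp [h0]

lemma zbinom_natCast (n k : ℕ) : zbinom (n : ℤ) k = (n.choose k : ℂ) := by
  have hf : (Nat.factorial k : ℂ) ≠ 0 := Nat.cast_ne_zero.mpr (Nat.factorial_ne_zero k)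
  unfold zbinom
  rw [show ((n : ℤ) : ℂ) = (n : ℂ) by push_cast; ring, prod_cast,
    Nat.descFactorial_eq_factorial_mul_choose, Nat.cast_mul]
  field_simp


lemma zbinom_neg (n k : ℕ) :
    zbinom (-(n : ℤ) - 1) k = (-1 : ℂ) ^ k * ((n + k).choose k : ℂ) := by
  have key : (∏ i ∈ Finset.range k, (((-(n:ℤ) - 1 : ℤ) : ℂ) - (i : ℂ)))
      = (-1 : ℂ) ^ k * ((n + k).descFactorial k : ℂ) := by
    induction k with
    | zero => simp
    | succ k ih =>
      rw [Finset.prod_range_succ, ih,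
        show n + (k+1) = (n + k) + 1 by ring, Nat.succ_descFactorial_succ]
      push_cast
      ring
  have hf : (Nat.factorial k : ℂ) ≠ 0 := Nat.cast_ne_zero.mpr (Nat.factorial_ne_zero k)
  unfold zbinom
  rw [key, Nat.descFactorial_eq_factorial_mul_choose, Nat.cast_mul]
  field_simp

lemma neg1_zpow (z : ℤ) : (-1 : ℂ) ^ z = (-1 : ℂ) ^ z.natAbs := by
  rcases Int.even_or_odd z with h | h
  · rw [h.neg_one_zpow, (Int.natAbs_even.mpr h).neg_one_pow]
  · rw [h.neg_one_zpow, (Int.natAbs_odd.mpr h).neg_one_pow]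

lemma zbinom_zero_of_lt (n k : ℕ) (h : n < k) : zbinom (n : ℤ) k = 0 := by
  rw [zbinom_natCast, Nat.choose_eq_zero_of_lt h, Nat.cast_zero]

lemma neg1_sq (k : ℕ) : (-1 : ℂ) ^ k * (-1 : ℂ) ^ k = 1 := by
  rw [← pow_add, show k + k = 2 * k by ring, pow_mul]
  norm_num

lemma neg1_succ (k : ℕ) : (-1 : ℂ) ^ (k + 1) = -(-1 : ℂ) ^ k := by
  rw [pow_succ]; ring

/-- The three-term delta function identity
`x₀⁻¹ δ((x₁-x₂)/x₀) - x₀⁻¹ δ((x₂-x₁)/(-x₀)) = x₂⁻¹ δ((x₁-x₀)/x₂)`,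
stated as an equality of coefficient functions: `t1 a b c`, `t2 a b c`, `t3 a b c` are the
coefficients of `x₀^a x₁^b x₂^c` in the three terms, each expanded by the binomial expansion
convention (nonnegative integral powers of the second listed variable). -/
theorem stmt_3
    (t1 t2 t3 : ℤ → ℤ → ℤ → ℂ)
    (ht1 : ∀ a b c : ℤ, t1 a b c =
      if 0 ≤ c ∧ b = -a - 1 - c then (-1 : ℂ) ^ c.toNat * zbinom (-a - 1) c.toNat else 0)
    (ht2 : ∀ a b c : ℤ, t2 a b c =
      if 0 ≤ b ∧ c = -a - 1 - b then (-1 : ℂ) ^ (a + b + 1) * zbinom (-a - 1) b.toNat else 0)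
    (ht3 : ∀ a b c : ℤ, t3 a b c =
      if 0 ≤ a ∧ b = -c - 1 - a then (-1 : ℂ) ^ a.toNat * zbinom (-c - 1) a.toNat else 0) :
    (fun a b c => t1 a b c - t2 a b c) = t3 := by
  funext a b c
  simp only [ht1, ht2, ht3]
  by_cases hs : a + b + c = -1
  case neg =>
    rw [if_neg (by rintro ⟨_, h⟩; omega), if_neg (by rintro ⟨_, h⟩; omega),
      if_neg (by rintro ⟨_, h⟩; omega)]
    ring
  case pos =>
    by_cases ha : 0 ≤ a <;> by_cases hb : 0 ≤ b <;> by_cases hc : 0 ≤ c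
    · omega
    · -- a≥0, b≥0, c<0
      rw [if_neg (by rintro ⟨h, _⟩; omega), if_pos ⟨hb, by omega⟩, if_pos ⟨ha, by omega⟩]
      obtain ⟨A, rfl⟩ := Int.eq_ofNat_of_zero_le ha
      obtain ⟨B, rfl⟩ := Int.eq_ofNat_of_zero_le hb
      rw [neg1_zpow, show (-c - 1 : ℤ) = ((A + B : ℕ) : ℤ) by push_cast; omega,
        zbinom_neg, zbinom_natCast, Int.toNat_natCast, Int.toNat_natCast,
        show ((A:ℤ) + (B:ℤ) + 1).natAbs = A + B + 1 by omega,
        Nat.choose_symm_add, neg1_succ, pow_add]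
      linear_combination ((-1 : ℂ) ^ A * ((A + B).choose B : ℂ)) * neg1_sq B
    · -- a≥0, b<0, c≥0
      rw [if_pos ⟨hc, by omega⟩, if_neg (by rintro ⟨h, _⟩; omega), if_pos ⟨ha, by omega⟩]
      obtain ⟨A, rfl⟩ := Int.eq_ofNat_of_zero_le ha
      obtain ⟨C, rfl⟩ := Int.eq_ofNat_of_zero_le hc
      rw [zbinom_neg A, zbinom_neg C, Int.toNat_natCast, Int.toNat_natCast,
        show C + A = A + C by ring, Nat.choose_symm_add]
      linear_combination (((A + C).choose C : ℂ)) * neg1_sq C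
        - (((A + C).choose C : ℂ)) * neg1_sq A
    · -- a≥0, b<0, c<0
      rw [if_neg (by rintro ⟨h, _⟩; omega), if_neg (by rintro ⟨h, _⟩; omega),
        if_pos ⟨ha, by omega⟩]
      rw [show (-c - 1 : ℤ) = (((-c - 1).toNat : ℕ) : ℤ) by omega,
        zbinom_zero_of_lt _ _ (by omega)]
      ring
    · -- a<0, b≥0, c≥0
      rw [if_pos ⟨hc, by omega⟩, if_pos ⟨hb, by omega⟩, if_neg (by rintro ⟨h, _⟩; omega)]
      obtain ⟨B, rfl⟩ := Int.eq_ofNat_of_zero_le hb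
      obtain ⟨C, rfl⟩ := Int.eq_ofNat_of_zero_le hc
      rw [show (-a - 1 : ℤ) = ((B + C : ℕ) : ℤ) by push_cast; omega,
        zbinom_natCast, zbinom_natCast, Int.toNat_natCast, Int.toNat_natCast,
        neg1_zpow, show (a + (B:ℤ) + 1).natAbs = C by omega, Nat.choose_symm_add]
      ring
    · -- a<0, b≥0, c<0
      rw [if_neg (by rintro ⟨h, _⟩; omega), if_pos ⟨hb, by omega⟩,
        if_neg (by rintro ⟨h, _⟩; omega)]
      rw [show (-a - 1 : ℤ) = (((-a - 1).toNat : ℕ) : ℤ) by omega,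
        zbinom_zero_of_lt _ _ (by omega)]
      ring
    · -- a<0, b<0, c≥0
      rw [if_pos ⟨hc, by omega⟩, if_neg (by rintro ⟨h, _⟩; omega),
        if_neg (by rintro ⟨h, _⟩; omega)]
      rw [show (-a - 1 : ℤ) = (((-a - 1).toNat : ℕ) : ℤ) by omega,
        zbinom_zero_of_lt _ _ (by omega)]
      ring
    · omega
end

section
/- L(-1)-derivative property for opposite vertex operators: (d/dx) Y^o_W(v, x) = Y^o_W(L(-1)v, x) for all v \in V. -/
open scoped BigOperators

/-- `L(-1)`-derivative property for opposite vertex operators: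
`(d/dx) Y^o_W(v,x) = Y^o_W(L(-1)v, x)`, in component form
`(L(-1)v)^o_n = -n • v^o_{n-1}` for all `v ∈ V`, `n ∈ ℤ`, where
`Y^o_W(v,x) = Y_W(e^{xL(1)}(-x^{-2})^{L(0)} v, x^{-1}) = ∑ v^o_n x^{-n-1}` is encoded by its
components `vo v n`. -/
theorem stmt_16 (V W : Type*) [AddCommGroup V] [Module ℂ V] [AddCommGroup W] [Module ℂ W]
    (gradeV : ℤ → Submodule ℂ V)
    (hVsup : (⨆ k : ℤ, gradeV k) = ⊤)
    (LV : ℤ → Module.End ℂ V)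
    (hLVshift : ∀ j : ℤ, (j = -1 ∨ j = 0 ∨ j = 1) → ∀ (k : ℤ) (v : V),
      v ∈ gradeV k → LV j v ∈ gradeV (k - j))
    (hLV0 : ∀ (k : ℤ) (v : V), v ∈ gradeV k → LV 0 v = (k : ℂ) • v)
    (hsl2a : LV 0 * LV (-1) - LV (-1) * LV 0 = LV (-1))
    (hsl2b : LV 0 * LV 1 - LV 1 * LV 0 = - LV 1)
    (hsl2c : LV (-1) * LV 1 - LV 1 * LV (-1) = - ((2 : ℂ) • LV 0))
    (hnil : ∀ v : V, ∃ m : ℕ, (LV 1 ^ m) v = 0)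
    (YW : V →ₗ[ℂ] ℤ → Module.End ℂ W)
    (LW : ℤ → Module.End ℂ W)
    (hbracket : ∀ j : ℤ, (j = -1 ∨ j = 0 ∨ j = 1) → ∀ (v : V) (n : ℤ),
      LW j * YW v n - YW v n * LW j
        = ∑ kk ∈ Finset.range (j + 2).toNat,
            (((j + 1).toNat.choose kk : ℂ)) • YW (LV (j - (kk : ℤ)) v) (n + (kk : ℤ)))
    (hderivW : ∀ (v : V) (n : ℤ), YW (LV (-1) v) n = (-(n : ℂ)) • YW v (n - 1))
    (vo : V →ₗ[ℂ] ℤ → Module.End ℂ W)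
    (hvo : ∀ (k : ℤ) (v : V), v ∈ gradeV k → ∀ (n : ℤ) (w : W),
      vo v n w = ∑ᶠ m : ℕ,
        (((-1 : ℂ) ^ k) * ((Nat.factorial m : ℂ))⁻¹) •
          YW ((LV 1 ^ m) v) (-n - (m : ℤ) - 2 + 2 * k) w) :
    ∀ (v : V) (n : ℤ), vo (LV (-1) v) n = (-(n : ℂ)) • vo v (n - 1) := by
  -- applied forms of the bracket relations
  have hb1 : ∀ u : V, LV 0 (LV 1 u) = LV 1 (LV 0 u) - LV 1 u := by
    intro u
    have h := congrArg (fun (E : Module.End ℂ V) => E u) hsl2b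
    simp only [LinearMap.sub_apply, Module.End.mul_apply, LinearMap.neg_apply] at h
    have := sub_eq_iff_eq_add.mp h
    rw [this]; abel
  have hb2 : ∀ u : V, LV 1 (LV (-1) u) = LV (-1) (LV 1 u) + (2 : ℂ) • LV 0 u := by
    intro u
    have h := congrArg (fun (E : Module.End ℂ V) => E u) hsl2c
    simp only [LinearMap.sub_apply, Module.End.mul_apply, LinearMap.neg_apply,
      LinearMap.smul_apply] at h
    have h2 := sub_eq_iff_eq_add.mp h
    rw [h2]; abel
  -- `L0 L1^m = L1^m L0 - m L1^m` (applied)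
  have h01 : ∀ (m : ℕ) (u : V),
      LV 0 ((LV 1 ^ m) u) = (LV 1 ^ m) (LV 0 u) - (m : ℂ) • (LV 1 ^ m) u := by
    intro m
    induction m with
    | zero => intro u; simp
    | succ m ih =>
      intro u
      have hp : ∀ x : V, (LV 1 ^ (m + 1)) x = LV 1 ((LV 1 ^ m) x) := by
        intro x; rw [pow_succ']; rfl
      rw [hp, hp, hb1, ih, map_sub, map_smul]
      push_cast
      module
  -- `L1^(m+1) L(-1) = L(-1) L1^(m+1) + (m+1) L1^m (2 L0 - m)` (applied)
  have hcomm : ∀ (m : ℕ) (u : V),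
      (LV 1 ^ (m + 1)) (LV (-1) u)
        = LV (-1) ((LV 1 ^ (m + 1)) u)
          + ((m : ℂ) + 1) • ((LV 1 ^ m) ((2 : ℂ) • LV 0 u - (m : ℂ) • u)) := by
    intro m
    induction m with
    | zero =>
      intro u
      simpa using hb2 u
    | succ m ih =>
      intro u
      have hp : ∀ x : V, (LV 1 ^ (m + 2)) x = LV 1 ((LV 1 ^ (m + 1)) x) := by
        intro x; rw [pow_succ']; rfl
      have hp1 : ∀ x : V, (LV 1 ^ (m + 1)) x = LV 1 ((LV 1 ^ m) x) := by
        intro x; rw [pow_succ']; rfl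
      rw [hp, ih, map_add, map_smul, hb2, h01 (m + 1)]
      rw [← hp1]
      have e1 : (LV 1 ^ (m + 1)) ((2 : ℂ) • LV 0 u - (m : ℂ) • u)
          = (2 : ℂ) • (LV 1 ^ (m + 1)) (LV 0 u) - (m : ℂ) • (LV 1 ^ (m + 1)) u := by
        rw [map_sub, map_smul, map_smul]
      have e2 : (LV 1 ^ (m + 1)) ((2 : ℂ) • LV 0 u - ((m : ℂ) + 1) • u)
          = (2 : ℂ) • (LV 1 ^ (m + 1)) (LV 0 u) - ((m : ℂ) + 1) • (LV 1 ^ (m + 1)) u := by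
        rw [map_sub, map_smul, map_smul]
      rw [e1]
      push_cast
      rw [e2]
      rw [hp]
      module
  -- the homogeneous case
  have hhom : ∀ (k : ℤ) (v : V), v ∈ gradeV k → ∀ n : ℤ,
      vo (LV (-1) v) n = (-(n : ℂ)) • vo v (n - 1) := by
    intro k v hv n
    ext w
    obtain ⟨M, hM⟩ := hnil v
    have hz : ∀ m : ℕ, M ≤ m → (LV 1 ^ m) v = 0 := by
      intro m hm
      have h : LV 1 ^ m = LV 1 ^ (m - M) * LV 1 ^ M := by
        rw [← pow_add, Nat.sub_add_cancel hm]
      rw [h, Module.End.mul_apply, hM, map_zero]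
    have hvk1 : LV (-1) v ∈ gradeV (k + 1) := by
      have := hLVshift (-1) (Or.inl rfl) k v hv
      simpa [sub_neg_eq_add] using this
    set F : ℕ → W := fun m =>
      (((-1 : ℂ) ^ (k + 1)) * ((Nat.factorial m : ℂ))⁻¹ * ((n : ℂ) + m - 2 * k)) •
        YW ((LV 1 ^ m) v) (-n - (m : ℤ) - 1 + 2 * k) w with hF
    set G : ℕ → W := fun m =>
      (((-1 : ℂ) ^ (k + 1)) * ((Nat.factorial m : ℂ))⁻¹ * (2 * (k : ℂ) - m)) •
        YW ((LV 1 ^ m) v) (-n - (m : ℤ) - 1 + 2 * k) w with hG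
    set A : ℕ → W := fun m =>
      (((-1 : ℂ) ^ (k + 1)) * ((Nat.factorial m : ℂ))⁻¹) •
        YW ((LV 1 ^ m) (LV (-1) v)) (-n - (m : ℤ) - 2 + 2 * (k + 1)) w with hA
    set B : ℕ → W := fun m =>
      (((-1 : ℂ) ^ k) * ((Nat.factorial m : ℂ))⁻¹) •
        YW ((LV 1 ^ m) v) (-(n - 1) - (m : ℤ) - 2 + 2 * k) w with hB
    have hkey : ∀ j : ℕ, (LV 1 ^ (j + 1)) (LV (-1) v)
        = LV (-1) ((LV 1 ^ (j + 1)) v)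
          + (((j : ℂ) + 1) * (2 * (k : ℂ) - j)) • (LV 1 ^ j) v := by
      intro j
      have hin : (2 : ℂ) • LV 0 v - (j : ℂ) • v = (2 * (k : ℂ) - j) • v := by
        rw [hLV0 k v hv, smul_smul, ← sub_smul]
      rw [hcomm j v, hin, map_smul, smul_smul]
    have hA0 : A 0 = F 0 := by
      simp only [hA, hF]
      have harg : -n - ((0 : ℕ) : ℤ) - 2 + 2 * (k + 1) = -n + 2 * k := by push_cast; ring
      rw [harg]
      have h0 : (LV 1 ^ 0) (LV (-1) v) = LV (-1) ((LV 1 ^ 0) v) := by simp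
      rw [h0, hderivW]
      simp only [LinearMap.smul_apply, smul_smul]
      have harg2 : -n + 2 * k - 1 = -n - ((0 : ℕ) : ℤ) - 1 + 2 * k := by push_cast; ring
      rw [harg2]
      congr 1
      push_cast; ring
    have hAsucc : ∀ j : ℕ, A (j + 1) = F (j + 1) + G j := by
      intro j
      simp only [hA, hF, hG]
      have harg : -n - ((j + 1 : ℕ) : ℤ) - 2 + 2 * (k + 1) = -n - (j : ℤ) - 1 + 2 * k := by
        push_cast; ring
      rw [harg, hkey j, map_add, map_smul]
      simp only [Pi.add_apply, Pi.smul_apply, LinearMap.add_apply, LinearMap.smul_apply]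
      rw [hderivW]
      simp only [LinearMap.smul_apply, smul_add, smul_smul]
      congr 1
      · have harg2 : -n - (j : ℤ) - 1 + 2 * k - 1 = -n - ((j + 1 : ℕ) : ℤ) - 1 + 2 * k := by
          push_cast; ring
        rw [harg2]
        congr 1
        push_cast; ring
      · congr 1
        have hfac : ((Nat.factorial (j + 1) : ℂ)) = ((j : ℂ) + 1) * (Nat.factorial j : ℂ) := by
          rw [Nat.factorial_succ]; push_cast; ring
        rw [hfac]
        have hj1 : ((j : ℂ) + 1) ≠ 0 := by
          have e : ((j : ℂ) + 1) = ((j + 1 : ℕ) : ℂ) := by push_cast; ring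
          rw [e]
          exact Nat.cast_ne_zero.mpr (Nat.succ_ne_zero j)
        have hfj : ((Nat.factorial j : ℂ)) ≠ 0 :=
          Nat.cast_ne_zero.mpr (Nat.factorial_ne_zero j)
        field_simp
    have hFG : ∀ m : ℕ, F m + G m = (-(n : ℂ)) • B m := by
      intro m
      simp only [hF, hG, hB]
      have harg : -(n - 1) - (m : ℤ) - 2 + 2 * k = -n - (m : ℤ) - 1 + 2 * k := by ring
      rw [harg, ← add_smul, smul_smul]
      congr 1
      have hpow : ((-1 : ℂ)) ^ (k + 1) = -((-1 : ℂ)) ^ k := by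
        rw [zpow_add₀ (by norm_num : (-1 : ℂ) ≠ 0), zpow_one]; ring
      rw [hpow]; ring
    have hF0 : ∀ m : ℕ, M ≤ m → F m = 0 := by
      intro m hm; simp [hF, hz m hm]
    have hG0 : ∀ m : ℕ, M ≤ m → G m = 0 := by
      intro m hm; simp [hG, hz m hm]
    have hB0 : ∀ m : ℕ, M ≤ m → B m = 0 := by
      intro m hm; simp [hB, hz m hm]
    have hA0' : ∀ m : ℕ, M + 1 ≤ m → A m = 0 := by
      intro m hm
      obtain ⟨j, rfl⟩ : ∃ j, m = j + 1 := ⟨m - 1, by omega⟩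
      rw [hAsucc j, hF0 _ (by omega), hG0 _ (by omega), add_zero]
    have hlhs : (vo (LV (-1) v) n) w = ∑ m ∈ Finset.range (M + 2), A m := by
      rw [hvo (k + 1) (LV (-1) v) hvk1 n w]
      exact finsum_eq_sum_of_support_subset A (by
        intro m hm
        simp only [Finset.coe_range, Set.mem_Iio]
        by_contra h
        exact hm (hA0' m (by omega)))
    have hrhs : (vo v (n - 1)) w = ∑ m ∈ Finset.range (M + 2), B m := by
      rw [hvo k v hv (n - 1) w]
      exact finsum_eq_sum_of_support_subset B (by
        intro m hm
        simp only [Finset.coe_range, Set.mem_Iio]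
        by_contra h
        exact hm (hB0 m (by omega)))
    rw [LinearMap.smul_apply, hlhs, hrhs, Finset.smul_sum]
    calc ∑ m ∈ Finset.range (M + 2), A m
        = (∑ j ∈ Finset.range (M + 1), A (j + 1)) + A 0 := Finset.sum_range_succ' A (M + 1)
      _ = (∑ j ∈ Finset.range (M + 1), (F (j + 1) + G j)) + F 0 := by
          rw [hA0]; congr 1; exact Finset.sum_congr rfl fun j _ => hAsucc j
      _ = ((∑ j ∈ Finset.range (M + 1), F (j + 1)) + F 0)
            + ∑ j ∈ Finset.range (M + 1), G j := by
          rw [Finset.sum_add_distrib]; abel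
      _ = (∑ m ∈ Finset.range (M + 2), F m) + ∑ j ∈ Finset.range (M + 2), G j := by
          rw [← Finset.sum_range_succ' F (M + 1), Finset.sum_range_succ G (M + 1),
            hG0 (M + 1) (by omega), add_zero]
      _ = ∑ m ∈ Finset.range (M + 2), (F m + G m) := (Finset.sum_add_distrib).symm
      _ = ∑ m ∈ Finset.range (M + 2), (-(n : ℂ)) • B m :=
          Finset.sum_congr rfl fun m _ => hFG m
  -- extend by linearity
  intro v n
  let S : Submodule ℂ V :=
    { carrier := {v | ∀ n : ℤ, vo (LV (-1) v) n = (-(n : ℂ)) • vo v (n - 1)}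
      add_mem' := by
        intro a b ha hb n
        rw [map_add, map_add, Pi.add_apply, map_add, Pi.add_apply, ha n, hb n, smul_add]
      zero_mem' := by
        intro n
        simp
      smul_mem' := by
        intro c a ha n
        rw [map_smul, map_smul, Pi.smul_apply, map_smul, Pi.smul_apply, ha n, smul_comm] }
  have hsub : ∀ k : ℤ, gradeV k ≤ S := fun k u hu => hhom k u hu
  have htop : (⊤ : Submodule ℂ V) ≤ S := by
    rw [← hVsup]; exact iSup_le hsub
  exact htop Submodule.mem_top n
end
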